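/- arXiv:1207.4449 — 5 statements merged into one kernel-verified Lean document; each statement's English description precedes it below -/
import Mathlib

section
/- For any ρ with 0 ≤ ρ < 1, the integral ∫₀¹ f(u,ρ,2) du = 1, where f(u,ρ,ν) = (ρ/(1-ρ))·(ρu/(1-ρ))^{ν-1}·(1-u)^{1/(1-ρ)} + (1 + ρu/(1-ρ))^ν·(1-u)^{1/(1-ρ)-1}. -/
open Real intervalIntegral

noncomputable def f (u ρ ν : ℝ) : ℝ :=
  (ρ / (1 - ρ)) * (ρ * u / (1 - ρ)) ^ (ν - 1) * (1 - u) ^ (1 / (1 - ρ)) +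
    (1 + ρ * u / (1 - ρ)) ^ ν * (1 - u) ^ (1 / (1 - ρ) - 1)

lemma rpow_split (x c : ℝ) (hx : 0 ≤ x) (hc : c ≠ 0) : x ^ c = x * x ^ (c - 1) := by
  rcases eq_or_lt_of_le hx with h | h
  · rw [← h, Real.zero_rpow hc, zero_mul]
  · nth_rewrite 1 [show c = 1 + (c - 1) by ring]
    rw [Real.rpow_add h, Real.rpow_one]

lemma int_one_sub_rpow (p : ℝ) (hp : -1 < p) :
    ∫ u in (0:ℝ)..1, (1 - u) ^ p = 1 / (p + 1) := by
  have := intervalIntegral.integral_comp_sub_left (fun x : ℝ => x ^ p) 1 (a := 0) (b := 1)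
  simp only [sub_zero, sub_self] at this
  rw [this, intervalIntegral.integral_symm,
    integral_rpow (Or.inl hp), Real.one_rpow, Real.zero_rpow (by linarith)]
  ring

theorem stmt_1 (ρ : ℝ) (h0 : 0 ≤ ρ) (h1 : ρ < 1) :
    ∫ u in (0:ℝ)..1, f u ρ 2 = 1 := by
  have hρ : (0:ℝ) < 1 - ρ := by linarith
  set c : ℝ := 1 / (1 - ρ) with hc_def
  have hc1 : 1 ≤ c := by
    rw [hc_def, le_div_iff₀ hρ]; linarith
  have hc0 : (0:ℝ) < c := by linarith
  have hcm1 : -1 < c - 1 := by linarith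
  have hkey : ∀ u ∈ Set.uIcc (0:ℝ) 1,
      f u ρ 2 = c ^ 2 * (1 - u) ^ (c - 1) - (c ^ 2 - 1) * (1 - u) ^ c := by
    intro u hu
    rw [Set.uIcc_of_le (by norm_num)] at hu
    have hu1 : 0 ≤ 1 - u := by linarith [hu.2]
    unfold f
    rw [show (2:ℝ) - 1 = 1 by norm_num, Real.rpow_one,
      show (2:ℝ) = ((2:ℕ):ℝ) by norm_num, Real.rpow_natCast,
      show (1:ℝ) / (1 - ρ) = c from rfl,
      rpow_split (1 - u) c hu1 (ne_of_gt hc0)]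
    rw [hc_def]
    field_simp
    ring
  have hint1 : IntervalIntegrable (fun u : ℝ => (1 - u) ^ (c - 1)) MeasureTheory.volume 0 1 := by
    simpa using ((intervalIntegrable_rpow' (a := 0) (b := 1) hcm1).comp_sub_left 1).symm
  have hint2 : IntervalIntegrable (fun u : ℝ => (1 - u) ^ c) MeasureTheory.volume 0 1 := by
    simpa using
      ((intervalIntegrable_rpow' (a := 0) (b := 1) (show -1 < c by linarith)).comp_sub_left 1).symm
  rw [intervalIntegral.integral_congr hkey,
    intervalIntegral.integral_sub (hint1.const_mul _) (hint2.const_mul _),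
    intervalIntegral.integral_const_mul, intervalIntegral.integral_const_mul,
    int_one_sub_rpow (c - 1) hcm1, int_one_sub_rpow c (by linarith)]
  have h1 : c - 1 + 1 = c := by ring
  rw [h1]
  have hc1' : c + 1 ≠ 0 := by positivity
  field_simp
  ring
end

section
/- If a nonnegative random variable B satisfies the dominated-variation condition inf_{x ≥ 0} P(B > 2x)/P(B > x) > 0 and has finite mean β > 0, then its integrated tail distribution B^{fw}, with P(B^{fw} > x) = (1/β)∫_x^∞ P(B > u) du, also satisfies inf_{x ≥ 0} P(B^{fw} > 2x)/P(B^{fw} > x) > 0. -/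
open Real Filter MeasureTheory

theorem stmt_6 {Ω : Type*} [MeasurableSpace Ω] (μ : Measure Ω) [IsProbabilityMeasure μ]
    (B : Ω → ℝ) (hBnn : ∀ ω, 0 ≤ B ω) (hBint : Integrable B μ)
    (β : ℝ) (hβ : β = ∫ ω, B ω ∂μ) (hβpos : 0 < β)
    (tail : ℝ → ℝ) (htail : ∀ x, tail x = (μ {ω | B ω > x}).toReal)
    (hpos : ∀ x, 0 < tail x)
    (hD : ∃ c > 0, ∀ x ≥ 0, c ≤ tail (2 * x) / tail x)
    (tailfw : ℝ → ℝ)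
    (htailfw : ∀ x, tailfw x = (1 / β) * ∫ u in Set.Ioi x, tail u) :
    ∃ c > 0, ∀ x ≥ 0, c ≤ tailfw (2 * x) / tailfw x := by
  obtain ⟨c, hc, hDc⟩ := hD
  -- the ennreal tail
  set g : ℝ → ENNReal := fun u => μ {ω | B ω > u} with hg
  have htg : ∀ u, tail u = (g u).toReal := htail
  have hanti : Antitone tail := by
    intro a b hab
    rw [htg a, htg b]
    exact ENNReal.toReal_mono (measure_ne_top μ _)
      (measure_mono (fun ω h => lt_of_le_of_lt hab h))
  have hmeas : Measurable tail := hanti.measurable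
  have htnn : ∀ u, 0 ≤ tail u := fun u => (hpos u).le
  -- layer cake: ∫⁻ g over Ioi 0 = ofReal β
  have hlayer : ∫⁻ t in Set.Ioi 0, g t = ENNReal.ofReal β := by
    rw [hβ, MeasureTheory.ofReal_integral_eq_lintegral_ofReal hBint (Filter.Eventually.of_forall hBnn),
      MeasureTheory.lintegral_eq_lintegral_meas_lt μ (Filter.Eventually.of_forall hBnn)
        hBint.aemeasurable]
  -- integrability of tail on Ioi x for x ≥ 0
  have hofReal : ∀ u, ENNReal.ofReal (tail u) = g u := by
    intro u
    rw [htg u, ENNReal.ofReal_toReal (measure_ne_top μ _)]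
  have hIntOn : ∀ x : ℝ, 0 ≤ x → IntegrableOn tail (Set.Ioi x) := by
    intro x hx
    refine ⟨hmeas.aestronglyMeasurable.restrict, ?_⟩
    rw [HasFiniteIntegral]
    have h1 : ∀ u : ℝ, (‖tail u‖₊ : ENNReal) = g u := by
      intro u
      rw [← hofReal u]; exact Real.enorm_eq_ofReal (htnn u)
    calc ∫⁻ u in Set.Ioi x, (‖tail u‖₊ : ENNReal)
        = ∫⁻ u in Set.Ioi x, g u := by simp_rw [h1]
      _ ≤ ∫⁻ t in Set.Ioi 0, g t := lintegral_mono_set (fun u hu => lt_of_le_of_lt hx hu)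
      _ = ENNReal.ofReal β := hlayer
      _ < ⊤ := ENNReal.ofReal_lt_top
  -- positivity of integrals
  have hIntPos : ∀ x : ℝ, 0 ≤ x → 0 < ∫ u in Set.Ioi x, tail u := by
    intro x hx
    have hsub : Set.Ioc x (x + 1) ⊆ Set.Ioi x := Set.Ioc_subset_Ioi_self
    have h1 : tail (x + 1) ≤ ∫ u in Set.Ioc x (x + 1), tail u := by
      have := MeasureTheory.setIntegral_mono_on
        (integrableOn_const (by simp [Real.volume_Ioc] : volume (Set.Ioc x (x+1)) < ⊤).ne)
        (((hIntOn x hx).mono_set hsub)) measurableSet_Ioc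
        (fun u hu => hanti hu.2 : ∀ u ∈ Set.Ioc x (x + 1), tail (x + 1) ≤ tail u)
      rwa [MeasureTheory.setIntegral_const, Real.volume_real_Ioc_of_le (show x ≤ x + 1 by linarith), smul_eq_mul,
        show x + 1 - x = 1 by ring, one_mul] at this
    have h2 : ∫ u in Set.Ioc x (x + 1), tail u ≤ ∫ u in Set.Ioi x, tail u :=
      MeasureTheory.setIntegral_mono_set (hIntOn x hx)
        (Filter.Eventually.of_forall htnn) (HasSubset.Subset.eventuallyLE hsub)
    have hp := hpos (x + 1)
    nlinarith
  -- main estimate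
  refine ⟨2 * c ^ 2 / (1 + 2 * c ^ 2), by positivity, ?_⟩
  intro x hx
  have h2x : (0:ℝ) ≤ 2 * x := by linarith
  set A := ∫ u in Set.Ioc x (2 * x), tail u with hA
  set Bq := ∫ u in Set.Ioi (2 * x), tail u with hBq
  -- split
  have hsplit : ∫ u in Set.Ioi x, tail u = A + Bq := by
    rw [← MeasureTheory.setIntegral_union (Set.Ioc_disjoint_Ioi le_rfl) measurableSet_Ioi
      ((hIntOn x hx).mono_set Set.Ioc_subset_Ioi_self) ((hIntOn x hx).mono_set
        (fun u hu => lt_of_le_of_lt (by linarith : x ≤ 2 * x) hu)),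
      Set.Ioc_union_Ioi_eq_Ioi (by linarith)]
  -- A ≤ tail x * x
  have hAle : A ≤ tail x * x := by
    have := MeasureTheory.setIntegral_mono_on
      ((hIntOn x hx).mono_set Set.Ioc_subset_Ioi_self)
      (integrableOn_const (by simp [Real.volume_Ioc] : volume (Set.Ioc x (2*x)) < ⊤).ne)
      measurableSet_Ioc (fun u hu => hanti hu.1.le : ∀ u ∈ Set.Ioc x (2 * x), tail u ≤ tail x)
    rwa [MeasureTheory.setIntegral_const, Real.volume_real_Ioc_of_le (show x ≤ 2 * x by linarith), smul_eq_mul,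
      show 2 * x - x = x by ring, mul_comm x] at this
  -- lower bound for Bq
  have hBqge : tail (2 * (2 * x)) * (2 * x) ≤ Bq := by
    have hsub : Set.Ioc (2 * x) (2 * (2 * x)) ⊆ Set.Ioi (2 * x) := Set.Ioc_subset_Ioi_self
    have h1 := MeasureTheory.setIntegral_mono_on
      (integrableOn_const (by simp [Real.volume_Ioc] : volume (Set.Ioc (2*x) (2*(2*x))) < ⊤).ne)
      ((hIntOn (2 * x) h2x).mono_set hsub) measurableSet_Ioc
      (fun u hu => hanti hu.2 : ∀ u ∈ Set.Ioc (2 * x) (2 * (2 * x)), tail (2 * (2 * x)) ≤ tail u)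
    rw [MeasureTheory.setIntegral_const, Real.volume_real_Ioc_of_le (show 2 * x ≤ 2 * (2 * x) by linarith), smul_eq_mul,
      show 2 * (2 * x) - 2 * x = 2 * x by ring] at h1
    have h2 : ∫ u in Set.Ioc (2 * x) (2 * (2 * x)), tail u ≤ Bq :=
      MeasureTheory.setIntegral_mono_set (hIntOn (2 * x) h2x)
        (Filter.Eventually.of_forall htnn) (HasSubset.Subset.eventuallyLE hsub)
    calc tail (2 * (2 * x)) * (2 * x) = (2 * x) * tail (2 * (2 * x)) := by ring
      _ ≤ ∫ u in Set.Ioc (2 * x) (2 * (2 * x)), tail u := h1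
      _ ≤ Bq := h2
  -- dominated variation chain
  have hd1 : c * tail x ≤ tail (2 * x) := by
    have := hDc x hx
    rw [le_div_iff₀ (hpos x)] at this; linarith
  have hd2 : c * tail (2 * x) ≤ tail (2 * (2 * x)) := by
    have := hDc (2 * x) h2x
    rw [le_div_iff₀ (hpos (2 * x))] at this; linarith
  have hkey : 2 * c ^ 2 * A ≤ Bq := by
    have h1 : c ^ 2 * tail x ≤ tail (2 * (2 * x)) := by nlinarith [hpos x, hpos (2*x)]
    nlinarith [hpos x, htnn (2 * (2 * x))]
  -- conclude
  have hApos : 0 ≤ A := by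
    have := hIntPos x hx
    rw [hsplit] at this
    exact MeasureTheory.setIntegral_nonneg measurableSet_Ioc (fun u _ => htnn u)
  have hBqpos : 0 < Bq := hIntPos (2 * x) h2x
  rw [htailfw, htailfw, hsplit]
  have hβne : β ≠ 0 := ne_of_gt hβpos
  rw [show (1 / β) * Bq / ((1 / β) * (A + Bq)) = Bq / (A + Bq) by
    rw [mul_div_mul_left _ _ (by positivity : (1:ℝ)/β ≠ 0)]]
  rw [div_le_div_iff₀ (by positivity) (by linarith)]
  nlinarith
end

section
/- Let F be a distribution function in class D (inf_x (1-F(2x))/(1-F(x)) > 0) which has an eventually non-increasing density f. Then F is intermediate regularly varying: lim_{ζ ↓ 1} liminf_{x→∞} (1-F(ζx))/(1-F(x)) = 1. -/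
open Real Filter MeasureTheory

theorem stmt_7 (F f : ℝ → ℝ)
    (hfnn : ∀ x, 0 ≤ f x)
    (hdens : ∀ x, F x = ∫ t in Set.Iic x, f t)
    (hpos : ∀ x, 0 < 1 - F x)
    (hmono : ∃ x₀ : ℝ, AntitoneOn f (Set.Ici x₀))
    (hD : ∃ c > 0, ∀ x ≥ 0, c ≤ (1 - F (2 * x)) / (1 - F x)) :
    Tendsto (fun ζ : ℝ => Filter.liminf (fun x => (1 - F (ζ * x)) / (1 - F x)) atTop)
      (nhdsWithin 1 (Set.Ioi 1)) (nhds 1) := by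
  obtain ⟨x₀, hx₀⟩ := hmono
  obtain ⟨c, hc, hD⟩ := hD
  by_cases hint : ∀ x : ℝ, IntegrableOn f (Set.Iic x)
  · -- main case: f is integrable on every Iic x
    have hFlt1 : ∀ x, F x < 1 := fun x => by linarith [hpos x]
    -- F a ≤ F b when a ≤ b, via integral over Ioc
    have hdiff : ∀ a b : ℝ, a ≤ b → F b - F a = ∫ t in Set.Ioc a b, f t := by
      intro a b hab
      rw [hdens, hdens, intervalIntegral.integral_Iic_sub_Iic (hint a) (hint b),
        intervalIntegral.integral_of_le hab]
    have hFmono : Monotone F := by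
      intro a b hab
      have h := hdiff a b hab
      have h2 : 0 ≤ ∫ t in Set.Ioc a b, f t :=
        setIntegral_nonneg measurableSet_Ioc (fun t _ => hfnn t)
      linarith
    set m : ℝ := max x₀ 0 with hm
    set M : ℝ := max (2 * m) 2 with hM
    have hM2 : (2:ℝ) ≤ M := le_max_right _ _
    -- key bound: x * f x ≤ (2/c) * (1 - F x) for x ≥ M
    have hbound : ∀ x : ℝ, M ≤ x → x * f x ≤ (2 / c) * (1 - F x) := by
      intro x hx
      have hx2 : (2:ℝ) ≤ x := le_trans hM2 hx
      have hx0 : (0:ℝ) < x := by linarith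
      have hhalf0 : (0:ℝ) ≤ x / 2 := by linarith
      have hhalfx₀ : x₀ ≤ x / 2 := by
        have : 2 * m ≤ x := le_trans (le_max_left _ _) hx
        have : m ≤ x / 2 := by linarith
        exact le_trans (le_max_left _ _) this
      have hstep1 : (x / 2) * f x ≤ ∫ t in Set.Ioc (x/2) x, f t := by
        have hIoc : Set.Ioc (x/2) x ⊆ Set.Iic x := fun t ht => ht.2
        have hfi : IntegrableOn f (Set.Ioc (x/2) x) := (hint x).mono_set hIoc
        have hmonoc : ∀ t ∈ Set.Ioc (x/2) x, f x ≤ f t := by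
          intro t ht
          exact hx₀ (Set.mem_Ici.2 (le_trans hhalfx₀ ht.1.le))
            (Set.mem_Ici.2 (by linarith [ht.1, hhalfx₀] : x₀ ≤ x)) ht.2
        have hci : IntegrableOn (fun _ => f x) (Set.Ioc (x/2) x) := by
          exact integrableOn_const (by simp [Real.volume_Ioc]) (by simp)
        have := setIntegral_mono_on hci hfi measurableSet_Ioc hmonoc
        calc (x / 2) * f x = ∫ _ in Set.Ioc (x/2) x, f x := by
              rw [setIntegral_const, smul_eq_mul, measureReal_def, Real.volume_Ioc,
                ENNReal.toReal_ofReal (by linarith)]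
              try ring
          _ ≤ ∫ t in Set.Ioc (x/2) x, f t := this
      have hstep2 : (∫ t in Set.Ioc (x/2) x, f t) = F x - F (x/2) :=
        (hdiff (x/2) x (by linarith)).symm
      have hstep3 : F x - F (x/2) ≤ 1 - F (x/2) := by linarith [hFlt1 x]
      have hD2 := hD (x/2) hhalf0
      rw [(by ring : 2 * (x/2) = x)] at hD2
      have hph : 0 < 1 - F (x/2) := hpos (x/2)
      have hstep4 : c * (1 - F (x/2)) ≤ 1 - F x := by
        rw [le_div_iff₀ hph] at hD2
        linarith
      have : (x / 2) * f x ≤ (1 - F x) / c := by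
        rw [le_div_iff₀ hc]
        calc (x / 2) * f x * c ≤ (1 - F (x/2)) * c := by
              have h1 : (x / 2) * f x ≤ 1 - F (x/2) := by
                linarith [hstep1, hstep2.symm ▸ hstep3]
              exact mul_le_mul_of_nonneg_right (by linarith [hstep1, hstep2, hstep3]) hc.le
          _ = c * (1 - F (x/2)) := by ring
          _ ≤ 1 - F x := hstep4
      calc x * f x = 2 * ((x/2) * f x) := by ring
        _ ≤ 2 * ((1 - F x) / c) := by linarith
        _ = (2 / c) * (1 - F x) := by ring
    -- upper bound on the ratio
    have hub : ∀ ζ : ℝ, 1 ≤ ζ → ∀ x : ℝ, 0 ≤ x → (1 - F (ζ * x)) / (1 - F x) ≤ 1 := by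
      intro ζ hζ x hx
      rw [div_le_one (hpos x)]
      have : x ≤ ζ * x := le_mul_of_one_le_left hx hζ
      linarith [hFmono this]
    -- lower bound on the ratio
    have hlb : ∀ ζ : ℝ, 1 < ζ → ∀ x : ℝ, M ≤ x →
        1 - (2 / c) * (ζ - 1) ≤ (1 - F (ζ * x)) / (1 - F x) := by
      intro ζ hζ x hx
      have hx2 : (2:ℝ) ≤ x := le_trans hM2 hx
      have hx0 : (0:ℝ) < x := by linarith
      have hxx₀ : x₀ ≤ x := by
        have h1 : 2 * m ≤ x := le_trans (le_max_left _ _) hx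
        have h2 : (0:ℝ) ≤ m := le_max_right _ _
        have : m ≤ x := by linarith
        exact le_trans (le_max_left _ _) this
      have hxζ : x ≤ ζ * x := le_mul_of_one_le_left hx0.le hζ.le
      have hdiffval : F (ζ * x) - F x = ∫ t in Set.Ioc x (ζ * x), f t := hdiff x (ζ * x) hxζ
      have hup : (∫ t in Set.Ioc x (ζ * x), f t) ≤ (ζ - 1) * x * f x := by
        have hIoc : Set.Ioc x (ζ * x) ⊆ Set.Iic (ζ * x) := fun t ht => ht.2
        have hfi : IntegrableOn f (Set.Ioc x (ζ * x)) := (hint (ζ * x)).mono_set hIoc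
        have hci : IntegrableOn (fun _ => f x) (Set.Ioc x (ζ * x)) := by
          exact integrableOn_const (by simp [Real.volume_Ioc]) (by simp)
        have hmonoc : ∀ t ∈ Set.Ioc x (ζ * x), f t ≤ f x := by
          intro t ht
          exact hx₀ (Set.mem_Ici.2 hxx₀) (Set.mem_Ici.2 (le_trans hxx₀ ht.1.le)) ht.1.le
        calc (∫ t in Set.Ioc x (ζ * x), f t) ≤ ∫ _ in Set.Ioc x (ζ * x), f x :=
              setIntegral_mono_on hfi hci measurableSet_Ioc hmonoc
          _ = (ζ - 1) * x * f x := by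
              rw [setIntegral_const, smul_eq_mul, measureReal_def, Real.volume_Ioc,
                ENNReal.toReal_ofReal (by linarith)]
              try ring
      have hxfx : x * f x ≤ (2 / c) * (1 - F x) := hbound x hx
      have hζ1 : (0:ℝ) ≤ ζ - 1 := by linarith
      have : F (ζ * x) - F x ≤ (ζ - 1) * ((2 / c) * (1 - F x)) := by
        calc F (ζ * x) - F x = ∫ t in Set.Ioc x (ζ * x), f t := hdiffval
          _ ≤ (ζ - 1) * x * f x := hup
          _ = (ζ - 1) * (x * f x) := by ring
          _ ≤ (ζ - 1) * ((2 / c) * (1 - F x)) := mul_le_mul_of_nonneg_left hxfx hζ1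
      rw [le_div_iff₀ (hpos x)]
      nlinarith [hpos x]
    -- squeeze
    have hev : ∀ ζ ∈ Set.Ioi (1:ℝ),
        1 - (2 / c) * (ζ - 1) ≤ liminf (fun x => (1 - F (ζ * x)) / (1 - F x)) atTop ∧
        liminf (fun x => (1 - F (ζ * x)) / (1 - F x)) atTop ≤ 1 := by
      intro ζ hζ
      have hζ1 : (1:ℝ) < ζ := hζ
      have hevlb : ∀ᶠ x in atTop, 1 - (2 / c) * (ζ - 1) ≤ (1 - F (ζ * x)) / (1 - F x) :=
        (eventually_ge_atTop M).mono (fun x hx => hlb ζ hζ1 x hx)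
      have hevub : ∀ᶠ x in atTop, (1 - F (ζ * x)) / (1 - F x) ≤ 1 :=
        (eventually_ge_atTop 0).mono (fun x hx => hub ζ hζ1.le x hx)
      have hcb : IsCoboundedUnder (· ≥ ·) atTop (fun x => (1 - F (ζ * x)) / (1 - F x)) :=
        isCoboundedUnder_ge_of_eventually_le atTop hevub
      have hbd : IsBoundedUnder (· ≥ ·) atTop (fun x => (1 - F (ζ * x)) / (1 - F x)) :=
        ⟨1 - (2 / c) * (ζ - 1), hevlb⟩
      exact ⟨le_liminf_of_le hcb hevlb, liminf_le_of_frequently_le hevub.frequently hbd⟩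
    have htlow : Tendsto (fun ζ : ℝ => 1 - (2 / c) * (ζ - 1))
        (nhdsWithin 1 (Set.Ioi 1)) (nhds 1) := by
      have h1 : Tendsto (fun ζ : ℝ => ζ - 1) (nhds 1) (nhds (1 - 1)) :=
        tendsto_id.sub tendsto_const_nhds
      have h2 := (h1.const_mul (2 / c)).const_sub 1
      have h3 : Tendsto (fun ζ : ℝ => 1 - (2 / c) * (ζ - 1)) (nhds 1) (nhds 1) := by
        simpa using h2
      exact h3.mono_left nhdsWithin_le_nhds
    refine tendsto_of_tendsto_of_tendsto_of_le_of_le' htlow tendsto_const_nhds ?_ ?_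
    · exact eventually_mem_nhdsWithin.mono (fun ζ hζ => (hev ζ hζ).1)
    · exact eventually_mem_nhdsWithin.mono (fun ζ hζ => (hev ζ hζ).2)
  · -- degenerate case: F x = 0 for all large x
    push_neg at hint
    obtain ⟨b, hb⟩ := hint
    have hF0 : ∀ x : ℝ, b ≤ x → F x = 0 := by
      intro x hx
      rw [hdens]
      exact integral_undef (fun h => hb (MeasureTheory.IntegrableOn.mono_set h (Set.Iic_subset_Iic.2 hx)))
    have hlim : ∀ ζ ∈ Set.Ioi (1:ℝ),
        liminf (fun x => (1 - F (ζ * x)) / (1 - F x)) atTop = 1 := by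
      intro ζ hζ
      have hζ1 : (1:ℝ) < ζ := hζ
      have heq : ∀ᶠ x in atTop, (1 - F (ζ * x)) / (1 - F x) = 1 := by
        filter_upwards [eventually_ge_atTop (max b 0)] with x hx
        have hxb : b ≤ x := le_trans (le_max_left _ _) hx
        have hx0 : (0:ℝ) ≤ x := le_trans (le_max_right _ _) hx
        have hζx : b ≤ ζ * x := le_trans hxb (le_mul_of_one_le_left hx0 hζ1.le)
        rw [hF0 x hxb, hF0 (ζ * x) hζx]
        norm_num
      rw [liminf_congr heq, liminf_const]
    have : ∀ᶠ ζ in nhdsWithin 1 (Set.Ioi 1),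
        liminf (fun x => (1 - F (ζ * x)) / (1 - F x)) atTop = (1:ℝ) :=
      eventually_mem_nhdsWithin.mono (fun ζ hζ => hlim ζ hζ)
    exact Tendsto.congr' (this.mono fun ζ h => h.symm) tendsto_const_nhds
end

section
/- Fix 0 ≤ ρ < 1 and let y ∈ (0,1). Then as u → ∞ (u real), the product ∏_{i=1}^{⌊n(u)⌋} (1 - 1/(q(1+ε) - i(1-ρ-ε))) with n(u) = (u/β)(1-ε) - R, u = (βq/(1-ρ))·y, satisfies: for each fixed ε ∈ (0, small) and R > 0, the product converges, as q → ∞, to (1 - y·((1-ε)(1-ρ-ε))/((1+ε)(1-ρ)))^{1/(1-ρ-ε)}·(1+o(1)). -/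
open Real Filter

lemma log_sub_log_le (b m : ℝ) (hb : 0 < b) (hm : 0 < m) :
    log (m + b) - log m ≤ b / m := by
  rw [← Real.log_div (by positivity) (ne_of_gt hm)]
  have h := Real.log_le_sub_one_of_pos (x := (m + b) / m) (by positivity)
  have : (m + b) / m - 1 = b / m := by field_simp; ring
  linarith

lemma le_log_sub_log (b m : ℝ) (hb : 0 < b) (hm : 0 < m - b) :
    b / m ≤ log m - log (m - b) := by
  have hm0 : 0 < m := by linarith
  rw [← Real.log_div (ne_of_gt hm0) (ne_of_gt hm)]
  have h := Real.one_sub_inv_le_log_of_pos (x := m / (m - b)) (by positivity)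
  have : 1 - (m / (m - b))⁻¹ = b / m := by
    rw [inv_div]; field_simp; ring
  linarith

lemma termwise_up (b m : ℝ) (hb0 : 0 < b) (hm : 2 ≤ m) :
    log (1 - 1 / m) ≤ -(1 / b) * (log (m + b) - log m) := by
  have hm0 : 0 < m := by linarith
  have h1 : log (1 - 1 / m) ≤ -(1 / m) := by
    have hp : (0:ℝ) < 1 - 1 / m := by
      have : 1 / m ≤ 1 / 2 := by
        apply div_le_div_of_nonneg_left (by norm_num) (by norm_num) hm
      linarith
    have h := Real.log_le_sub_one_of_pos hp
    have : 1 - 1 / m - 1 = -(1/m) := by ring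
    linarith
  have h2 : log (m + b) - log m ≤ b / m := log_sub_log_le b m hb0 hm0
  have h3 : -(1 / b) * (log (m + b) - log m) ≥ -(1/b) * (b / m) := by
    have : 0 < 1 / b := by positivity
    nlinarith
  have : -(1/b) * (b/m) = -(1/m) := by field_simp
  linarith

lemma termwise_low (b m : ℝ) (hb0 : 0 < b) (hb1 : b < 1) (hm : 2 ≤ m) :
    -(1 / b) * (log (m - 1) - log (m - 1 - b)) ≤ log (1 - 1 / m) := by
  have hm0 : 0 < m := by linarith
  have hm1 : 0 < m - 1 := by linarith
  have hm1b : 0 < m - 1 - b := by linarith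
  have heq : 1 - 1 / m = (m - 1) / m := by field_simp
  have h1 : -(1 / (m - 1)) ≤ log (1 - 1 / m) := by
    rw [heq, Real.log_div (ne_of_gt hm1) (ne_of_gt hm0)]
    have h := log_sub_log_le 1 (m - 1) one_pos hm1
    have : m - 1 + 1 = m := by ring
    rw [this] at h
    linarith
  have h2 : b / (m - 1) ≤ log (m - 1) - log (m - 1 - b) :=
    le_log_sub_log b (m - 1) hb0 hm1b
  have h3 : -(1 / b) * (log (m - 1) - log (m - 1 - b)) ≤ -(1/b) * (b / (m-1)) := by
    have : 0 < 1 / b := by positivity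
    nlinarith
  have : -(1/b) * (b/(m-1)) = -(1/(m-1)) := by field_simp
  linarith

set_option maxHeartbeats 2000000 in
theorem stmt_18 (ρ y β ε R : ℝ) (h0 : 0 ≤ ρ) (h1 : ρ < 1)
    (hy0 : 0 < y) (hy1 : y < 1) (hβ : 0 < β) (hR : 0 < R)
    (hε0 : 0 < ε) (hε : ε < 1 - ρ) :
    Tendsto (fun q : ℝ =>
        ∏ i ∈ Finset.Icc 1 ⌊(β * q * y / (1 - ρ) / β) * (1 - ε) - R⌋₊,
          (1 - 1 / (q * (1 + ε) - (i : ℝ) * (1 - ρ - ε))))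
      atTop
      (nhds ((1 - y * ((1 - ε) * (1 - ρ - ε)) / ((1 + ε) * (1 - ρ))) ^ (1 / (1 - ρ - ε)))) := by
  have hρ : 0 < 1 - ρ := by linarith
  have hε1 : ε < 1 := by linarith
  set b : ℝ := 1 - ρ - ε with hbdef
  have hb0 : 0 < b := by simp only [hbdef]; linarith
  have hb1 : b < 1 := by simp only [hbdef]; linarith
  set c : ℝ := y * (1 - ε) / (1 - ρ) with hcdef
  have hc0 : 0 < c := by
    apply div_pos (by nlinarith) hρ
  have hbc : b * c < 1 := by
    have h1' : b * c = (1 - ρ - ε) * (y * (1 - ε)) / (1 - ρ) := by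
      rw [hcdef, hbdef]; ring
    rw [h1', div_lt_one hρ]
    have ht0 : 0 < y * (1 - ε) := by nlinarith
    have ht1 : y * (1 - ε) < 1 := by nlinarith
    nlinarith [mul_lt_mul_of_pos_right (show 1 - ρ - ε < 1 - ρ by linarith) ht0]
  have hA : 0 < 1 + ε - b * c := by linarith
  -- simplify floor argument
  have hfl : ∀ q : ℝ, β * q * y / (1 - ρ) / β * (1 - ε) - R = q * c - R := by
    intro q
    rw [hcdef]
    field_simp
  simp only [hfl]
  -- simplify target
  have hbase : 1 - y * ((1 - ε) * b) / ((1 + ε) * (1 - ρ)) = 1 - b * c / (1 + ε) := by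
    rw [hcdef]
    field_simp
  rw [hbase]
  set N : ℝ → ℕ := fun q => ⌊q * c - R⌋₊ with hNdef
  have hbasepos : 0 < 1 - b * c / (1 + ε) := by
    rw [sub_pos, div_lt_one (by linarith)]
    linarith
  -- N q / q → c
  have hNle : ∀ q : ℝ, R / c ≤ q → (N q : ℝ) ≤ q * c - R := by
    intro q hq
    apply Nat.floor_le
    rw [div_le_iff₀ hc0] at hq
    nlinarith
  have hNgt : ∀ q : ℝ, q * c - R - 1 < (N q : ℝ) := by
    intro q
    have := Nat.lt_floor_add_one (q * c - R)
    linarith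
  have hNq : Tendsto (fun q => (N q : ℝ) / q) atTop (nhds c) := by
    have hlow : Tendsto (fun q : ℝ => c - (R + 1) / q) atTop (nhds c) := by
      have h := Filter.Tendsto.div_atTop
        (tendsto_const_nhds : Tendsto (fun _ : ℝ => R + 1) atTop (nhds (R + 1))) tendsto_id
      simpa using tendsto_const_nhds.sub h
    have hhigh : Tendsto (fun q : ℝ => c - R / q) atTop (nhds c) := by
      have h := Filter.Tendsto.div_atTop
        (tendsto_const_nhds : Tendsto (fun _ : ℝ => R) atTop (nhds R)) tendsto_id
      simpa using tendsto_const_nhds.sub h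
    apply tendsto_of_tendsto_of_tendsto_of_le_of_le' hlow hhigh
    · filter_upwards [eventually_gt_atTop 0] with q hq
      have h := hNgt q
      have e : c - (R + 1) / q = (q * c - R - 1) / q := by field_simp; ring
      rw [e, div_le_div_iff_of_pos_right hq]
      linarith
    · filter_upwards [eventually_gt_atTop 0, eventually_ge_atTop (R / c)] with q hq hq'
      have h := hNle q hq'
      have e : c - R / q = (q * c - R) / q := by field_simp
      rw [e, div_le_div_iff_of_pos_right hq]
      linarith
  -- the common limit
  set l : ℝ := -(1 / b) * (log (1 + ε) - log (1 + ε - c * b)) with hldef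
  have hA' : 0 < 1 + ε - c * b := by rw [mul_comm]; exact hA
  have h1ε : (0:ℝ) < 1 + ε := by linarith
  -- master pointwise bound
  have hmaster : ∀ q : ℝ, 1 ≤ q → R / c ≤ q → (3 + b) / (1 + ε - b * c) ≤ q →
      ∀ i : ℕ, (i : ℝ) ≤ (N q : ℝ) + 1 → 2 ≤ q * (1 + ε) - (i : ℝ) * b := by
    intro q hq1 hq2 hq3 i hi
    have hq0 : (0:ℝ) < q := by linarith
    have h4 := hNle q hq2
    have h5 : 3 + b ≤ q * (1 + ε - b * c) := by
      rw [div_le_iff₀ hA] at hq3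
      nlinarith
    nlinarith [mul_le_mul_of_nonneg_right hi hb0.le,
      mul_le_mul_of_nonneg_right h4 hb0.le]
  -- upper comparison limit
  have hUlim : Tendsto (fun q : ℝ =>
      -(1 / b) * (log (q * (1 + ε)) - log (q * (1 + ε) - (N q : ℝ) * b)))
      atTop (nhds l) := by
    have h1 : Tendsto (fun q : ℝ => (1 + ε) - (N q : ℝ) / q * b) atTop
        (nhds (1 + ε - c * b)) := tendsto_const_nhds.sub (hNq.mul_const b)
    have h2 : Tendsto (fun q : ℝ => log ((1 + ε) - (N q : ℝ) / q * b)) atTop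
        (nhds (log (1 + ε - c * b))) :=
      ((Real.continuousAt_log hA'.ne').tendsto).comp h1
    have h3 : Tendsto (fun q : ℝ =>
        -(1 / b) * (log (1 + ε) - log ((1 + ε) - (N q : ℝ) / q * b))) atTop (nhds l) := by
      rw [hldef]
      exact (tendsto_const_nhds.sub h2).const_mul _
    apply Filter.Tendsto.congr' _ h3
    filter_upwards [eventually_ge_atTop 1, eventually_ge_atTop (R / c),
      eventually_ge_atTop ((3 + b) / (1 + ε - b * c))] with q hq1 hq2 hq3
    have hq0 : (0:ℝ) < q := by linarith
    have hm := hmaster q hq1 hq2 hq3 (N q) (by linarith)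
    have hpos2 : 0 < (1 + ε) - (N q : ℝ) / q * b := by
      have e : (1 + ε) - (N q : ℝ) / q * b = (q * (1 + ε) - (N q : ℝ) * b) / q := by
        field_simp
      rw [e]
      apply div_pos (by linarith) hq0
    have e1 : q * (1 + ε) - (N q : ℝ) * b = q * ((1 + ε) - (N q : ℝ) / q * b) := by
      field_simp
    rw [e1, Real.log_mul hq0.ne' hpos2.ne', Real.log_mul hq0.ne' h1ε.ne']
    ring
  -- lower comparison limit
  have hLolim : Tendsto (fun q : ℝ =>
      -(1 / b) * (log (q * (1 + ε) - 1 - b) - log (q * (1 + ε) - 1 - b - (N q : ℝ) * b)))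
      atTop (nhds l) := by
    have hd : Tendsto (fun q : ℝ => (1 + b) / q) atTop (nhds 0) :=
      Filter.Tendsto.div_atTop
        (tendsto_const_nhds : Tendsto (fun _ : ℝ => 1 + b) atTop (nhds (1 + b))) tendsto_id
    have hf1 : Tendsto (fun q : ℝ => (1 + ε) - (1 + b) / q) atTop (nhds (1 + ε)) := by
      simpa using tendsto_const_nhds.sub hd
    have hf2 : Tendsto (fun q : ℝ => (1 + ε) - (1 + b) / q - (N q : ℝ) / q * b) atTop
        (nhds (1 + ε - c * b)) := by
      simpa using hf1.sub (hNq.mul_const b)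
    have h2 : Tendsto (fun q : ℝ => log ((1 + ε) - (1 + b) / q)) atTop
        (nhds (log (1 + ε))) := ((Real.continuousAt_log h1ε.ne').tendsto).comp hf1
    have h2' : Tendsto (fun q : ℝ => log ((1 + ε) - (1 + b) / q - (N q : ℝ) / q * b)) atTop
        (nhds (log (1 + ε - c * b))) := ((Real.continuousAt_log hA'.ne').tendsto).comp hf2
    have h3 : Tendsto (fun q : ℝ =>
        -(1 / b) * (log ((1 + ε) - (1 + b) / q)
          - log ((1 + ε) - (1 + b) / q - (N q : ℝ) / q * b))) atTop (nhds l) := by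
      rw [hldef]
      exact (h2.sub h2').const_mul _
    apply Filter.Tendsto.congr' _ h3
    filter_upwards [eventually_ge_atTop 1, eventually_ge_atTop (R / c),
      eventually_ge_atTop ((3 + b) / (1 + ε - b * c))] with q hq1 hq2 hq3
    have hq0 : (0:ℝ) < q := by linarith
    have hm := hmaster q hq1 hq2 hq3 (N q + 1) (by push_cast; linarith)
    have hm' : 2 ≤ q * (1 + ε) - ((N q : ℝ) + 1) * b := by push_cast at hm; linarith
    have hpos1 : 0 < (1 + ε) - (1 + b) / q := by
      have e : (1 + ε) - (1 + b) / q = (q * (1 + ε) - 1 - b) / q := by field_simp; ring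
      rw [e]
      apply div_pos _ hq0
      nlinarith
    have hpos2 : 0 < (1 + ε) - (1 + b) / q - (N q : ℝ) / q * b := by
      have e : (1 + ε) - (1 + b) / q - (N q : ℝ) / q * b
          = (q * (1 + ε) - 1 - b - (N q : ℝ) * b) / q := by field_simp; ring
      rw [e]
      apply div_pos _ hq0
      nlinarith
    have e1 : q * (1 + ε) - 1 - b = q * ((1 + ε) - (1 + b) / q) := by field_simp; ring
    have e2 : q * (1 + ε) - 1 - b - (N q : ℝ) * b
        = q * ((1 + ε) - (1 + b) / q - (N q : ℝ) / q * b) := by field_simp; ring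
    rw [e2, e1, Real.log_mul hq0.ne' hpos2.ne', Real.log_mul hq0.ne' hpos1.ne']
    ring
  -- the sum of logs
  set S : ℝ → ℝ := fun q => ∑ i ∈ Finset.Icc 1 (N q),
    log (1 - 1 / (q * (1 + ε) - (i : ℝ) * b)) with hSdef
  have hS : Tendsto S atTop (nhds l) := by
    apply tendsto_of_tendsto_of_tendsto_of_le_of_le' hLolim hUlim
    · -- lower bound on S
      filter_upwards [eventually_ge_atTop 1, eventually_ge_atTop (R / c),
        eventually_ge_atTop ((3 + b) / (1 + ε - b * c))] with q hq1 hq2 hq3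
      have hkey := hmaster q hq1 hq2 hq3
      have hre : S q = ∑ i ∈ Finset.range (N q),
          log (1 - 1 / (q * (1 + ε) - ((1 + i : ℕ) : ℝ) * b)) := by
        rw [hSdef]
        simp only
        rw [← Finset.Ico_add_one_right_eq_Icc, Finset.sum_Ico_eq_sum_range]
        simp
      rw [hre]
      set g : ℕ → ℝ := fun i => log (q * (1 + ε) - 1 - b - (i : ℝ) * b) with hgdef
      have htel : ∑ i ∈ Finset.range (N q), (-(1 / b) * (g i - g (i + 1)))
          = -(1 / b) * (log (q * (1 + ε) - 1 - b) - log (q * (1 + ε) - 1 - b - (N q : ℝ) * b)) := by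
        rw [← Finset.mul_sum, Finset.sum_range_sub' g (N q)]
        rw [hgdef]
        norm_num
      rw [← htel]
      apply Finset.sum_le_sum
      intro i hi
      rw [Finset.mem_range] at hi
      have him : ((1 + i : ℕ) : ℝ) ≤ (N q : ℝ) + 1 := by
        push_cast
        have : (i : ℝ) + 1 ≤ (N q : ℝ) := by exact_mod_cast Nat.succ_le_of_lt hi
        linarith
      have hm := hkey (1 + i) him
      have eC : q * (1 + ε) - 1 - b - (i : ℝ) * b
          = q * (1 + ε) - ((1 + i : ℕ) : ℝ) * b - 1 := by push_cast; ring
      have eD : q * (1 + ε) - 1 - b - (((i + 1) : ℕ) : ℝ) * b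
          = q * (1 + ε) - ((1 + i : ℕ) : ℝ) * b - 1 - b := by push_cast; ring
      rw [hgdef]
      simp only
      rw [eC, eD]
      exact termwise_low b _ hb0 hb1 hm
    · -- upper bound on S
      filter_upwards [eventually_ge_atTop 1, eventually_ge_atTop (R / c),
        eventually_ge_atTop ((3 + b) / (1 + ε - b * c))] with q hq1 hq2 hq3
      have hkey := hmaster q hq1 hq2 hq3
      have hre : S q = ∑ i ∈ Finset.range (N q),
          log (1 - 1 / (q * (1 + ε) - ((1 + i : ℕ) : ℝ) * b)) := by
        rw [hSdef]
        simp only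
        rw [← Finset.Ico_add_one_right_eq_Icc, Finset.sum_Ico_eq_sum_range]
        simp
      rw [hre]
      set g : ℕ → ℝ := fun i => log (q * (1 + ε) - (i : ℝ) * b) with hgdef
      have htel : ∑ i ∈ Finset.range (N q), (-(1 / b) * (g i - g (i + 1)))
          = -(1 / b) * (log (q * (1 + ε)) - log (q * (1 + ε) - (N q : ℝ) * b)) := by
        rw [← Finset.mul_sum, Finset.sum_range_sub' g (N q)]
        rw [hgdef]
        norm_num
      rw [← htel]
      apply Finset.sum_le_sum
      intro i hi
      rw [Finset.mem_range] at hi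
      have him : ((1 + i : ℕ) : ℝ) ≤ (N q : ℝ) + 1 := by
        push_cast
        have : (i : ℝ) + 1 ≤ (N q : ℝ) := by exact_mod_cast Nat.succ_le_of_lt hi
        linarith
      have hm := hkey (1 + i) him
      have eA : q * (1 + ε) - (i : ℝ) * b
          = q * (1 + ε) - ((1 + i : ℕ) : ℝ) * b + b := by push_cast; ring
      have eB : q * (1 + ε) - (((i + 1) : ℕ) : ℝ) * b
          = q * (1 + ε) - ((1 + i : ℕ) : ℝ) * b := by push_cast; ring
      rw [hgdef]
      simp only
      rw [eA, eB]
      exact termwise_up b _ hb0 hm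
  -- conclude
  have hexp : Tendsto (fun q => exp (S q)) atTop (nhds (exp l)) :=
    (Real.continuous_exp.tendsto l).comp hS
  have hexpl : exp l = (1 - b * c / (1 + ε)) ^ ((1:ℝ) / b) := by
    rw [Real.rpow_def_of_pos hbasepos]
    congr 1
    have e : 1 - b * c / (1 + ε) = (1 + ε - c * b) / (1 + ε) := by field_simp
    rw [e, Real.log_div hA'.ne' h1ε.ne', hldef]
    ring
  rw [← hexpl]
  apply Filter.Tendsto.congr' _ hexp
  filter_upwards [eventually_ge_atTop 1, eventually_ge_atTop (R / c),
    eventually_ge_atTop ((3 + b) / (1 + ε - b * c))] with q hq1 hq2 hq3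
  have hkey := hmaster q hq1 hq2 hq3
  rw [hSdef]
  simp only
  rw [Real.exp_sum]
  apply Finset.prod_congr rfl
  intro i hi
  rw [Finset.mem_Icc] at hi
  have him : (i : ℝ) ≤ (N q : ℝ) + 1 := by
    have : (i : ℝ) ≤ (N q : ℝ) := by exact_mod_cast hi.2
    linarith
  have hm := hkey i him
  apply Real.exp_log
  have : 1 / (q * (1 + ε) - (i : ℝ) * b) ≤ 1 / 2 :=
    div_le_div_of_nonneg_left (by norm_num) (by norm_num) hm
  linarith
end

section
/- Let B be a nonnegative random variable with P(B > x) > 0 for all x, belonging to L ∩ D (long-tailed and dominated variation), with finite mean β. Let B₁, B₂ be i.i.d. copies of B and fix α > 0, ρ ∈ (0,1). Then ∑_{m₁=1}^∞ ∑_{m₂=1}^∞ P(B₁ > (x+m₁α)(1-ρ))·P(B₂ > (x+m₂α)(1-ρ)) = o(P(B^{fw} > x)) as x → ∞, where P(B^{fw}>x) = (1/β)∫_x^∞ P(B>u) du. -/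
open Real Filter MeasureTheory Set
open scoped ENNReal NNReal

lemma tail_meas (B : ℝ → ℝ) (μ : Measure ℝ) : Measurable (fun t => (μ {ω | B ω > t}).toReal) :=
  Measurable.ennreal_toReal (Antitone.measurable (fun _ _ hst => measure_mono (fun _ h => lt_of_le_of_lt hst h)))

lemma tail_io {Ω : Type*} [MeasurableSpace Ω] (μ : Measure Ω) [IsProbabilityMeasure μ]
    (B : Ω → ℝ) (hBnn : ∀ ω, 0 ≤ B ω) (hBint : Integrable B μ) (a : ℝ) :
    IntegrableOn (fun t => (μ {ω | B ω > t}).toReal) (Set.Ioi a) := by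
  set tail := fun t => (μ {ω | B ω > t}).toReal with htl
  have hmeas : Measurable tail :=
    Measurable.ennreal_toReal (Antitone.measurable (fun _ _ hst => measure_mono (fun _ h => lt_of_le_of_lt hst h)))
  have h1 : IntegrableOn tail (Set.Ioi 0) := by
    refine ⟨hmeas.aestronglyMeasurable.restrict, ?_⟩
    rw [hasFiniteIntegral_iff_ofReal (Eventually.of_forall (fun t => ENNReal.toReal_nonneg))]
    have key : ∫⁻ t in Set.Ioi 0, ENNReal.ofReal (tail t) = ∫⁻ t in Set.Ioi 0, μ {ω | t < B ω} := by
      refine lintegral_congr (fun t => ?_)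
      exact ENNReal.ofReal_toReal (measure_ne_top μ _)
    rw [key, ← lintegral_eq_lintegral_meas_lt μ (Eventually.of_forall hBnn) hBint.aemeasurable]
    exact hBint.lintegral_lt_top
  have h2 : IntegrableOn tail (Set.Ioc a 0) := by
    refine Integrable.mono' (integrableOn_const (s := Set.Ioc a 0) (μ := volume) (C := (1:ℝ)) measure_Ioc_lt_top.ne) hmeas.aestronglyMeasurable.restrict ?_
    refine Eventually.of_forall (fun t => ?_)
    rw [Real.norm_of_nonneg ENNReal.toReal_nonneg]
    exact ENNReal.toReal_le_of_le_ofReal zero_le_one (by simpa using prob_le_one)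
  have := h2.union h1
  refine this.mono_set (fun t ht => ?_)
  rcases le_or_gt t 0 with h | h
  · exact Or.inl ⟨ht, h⟩
  · exact Or.inr h

section Helpers
variable (f : ℝ → ℝ)

lemma I_anti (hnn : ∀ x, 0 ≤ f x) (hint : ∀ a, IntegrableOn f (Set.Ioi a)) :
    Antitone (fun x => ∫ u in Set.Ioi x, f u) := by
  intro x y hxy
  exact setIntegral_mono_set (hint x) (Eventually.of_forall hnn) (HasSubset.Subset.eventuallyLE (Set.Ioi_subset_Ioi hxy))

lemma I_pos (hanti : Antitone f) (hpos : ∀ x, 0 < f x) (hint : ∀ a, IntegrableOn f (Set.Ioi a)) (x : ℝ) :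
    0 < ∫ u in Set.Ioi x, f u := by
  have h1 : ∫ u in Set.Ioc x (x+1), (fun _ => f (x+1)) u ≤ ∫ u in Set.Ioc x (x+1), f u := by
    refine setIntegral_mono_on (integrableOn_const (s := Set.Ioc x (x+1)) (μ := volume) (C := f (x+1)) measure_Ioc_lt_top.ne)
      ((hint x).mono_set Set.Ioc_subset_Ioi_self) measurableSet_Ioc (fun u hu => hanti hu.2)
  have h2 : ∫ u in Set.Ioc x (x+1), (fun _ => f (x+1)) u = f (x+1) := by
    rw [setIntegral_const, Real.volume_real_Ioc, smul_eq_mul]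
    norm_num
  have h3 : ∫ u in Set.Ioc x (x+1), f u ≤ ∫ u in Set.Ioi x, f u :=
    setIntegral_mono_set (hint x) (Eventually.of_forall (fun u => (hpos u).le))
      (HasSubset.Subset.eventuallyLE Set.Ioc_subset_Ioi_self)
  have := hpos (x+1)
  linarith

lemma I_zero (hnn : ∀ x, 0 ≤ f x) (hint : ∀ a, IntegrableOn f (Set.Ioi a)) :
    Tendsto (fun x => ∫ u in Set.Ioi x, f u) atTop (nhds 0) := by
  have hU : (⋃ x : ℝ, Set.Ioc 0 x) = Set.Ioi 0 := by
    ext t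
    simp only [Set.mem_iUnion, Set.mem_Ioc, Set.mem_Ioi]
    exact ⟨fun ⟨x, hx, _⟩ => hx, fun h => ⟨t, h, le_refl t⟩⟩
  have h := tendsto_setIntegral_of_monotone (μ := volume) (f := f) (s := fun x : ℝ => Set.Ioc 0 x)
    (fun _ => measurableSet_Ioc) (fun x y hxy => Set.Ioc_subset_Ioc_right hxy)
    (by rw [hU]; exact hint 0)
  rw [hU] at h
  have heq : (fun x => ∫ u in Set.Ioi x, f u) =ᶠ[atTop]
      (fun x => (∫ u in Set.Ioi (0:ℝ), f u) - ∫ u in Set.Ioc 0 x, f u) := by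
    filter_upwards [eventually_ge_atTop (0:ℝ)] with x hx
    have hsplit : ∫ u in Set.Ioc 0 x ∪ Set.Ioi x, f u
        = (∫ u in Set.Ioc 0 x, f u) + ∫ u in Set.Ioi x, f u :=
      setIntegral_union (Set.Ioc_disjoint_Ioi le_rfl) measurableSet_Ioi
        ((hint 0).mono_set Set.Ioc_subset_Ioi_self) (hint x)
    rw [Set.Ioc_union_Ioi_eq_Ioi hx] at hsplit
    linarith
  rw [Filter.tendsto_congr' heq]
  simpa using (tendsto_const_nhds (x := ∫ u in Set.Ioi (0:ℝ), f u)).sub h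

end Helpers

section Helpers2
variable (f : ℝ → ℝ)

lemma sum_le_int (hanti : Antitone f) (hnn : ∀ x, 0 ≤ f x)
    (hint : ∀ a, IntegrableOn f (Set.Ioi a)) (L : ℝ) (hL : 0 < L) (a : ℝ) :
    ∑' m : ℕ, f (a + ((m : ℝ) + 1) * L) ≤ (∫ u in Set.Ioi a, f u) / L := by
  refine Real.tsum_le_of_sum_range_le (fun m => hnn _) (fun N => ?_)
  rw [le_div_iff₀ hL]
  set g : ℕ → ℝ := fun k => a + k * L with hg
  have hmn : ∀ k : ℕ, g k ≤ g (k+1) := by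
    intro k; simp only [hg]; push_cast; nlinarith
  have hgs : ∀ k : ℕ, g (k+1) = a + ((k:ℝ)+1) * L := by
    intro k; simp only [hg]; push_cast; ring
  have hii : ∀ k : ℕ, IntervalIntegrable f volume (g k) (g (k+1)) := by
    intro k
    rw [intervalIntegrable_iff, Set.uIoc_of_le (hmn k)]
    exact (hint (g k)).mono_set Set.Ioc_subset_Ioi_self
  have hsum : ∑ k ∈ Finset.range N, ∫ x in (g k)..(g (k+1)), f x = ∫ x in (g 0)..(g N), f x :=
    intervalIntegral.sum_integral_adjacent_intervals (fun k _ => hii k)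
  have hterm : ∀ k : ℕ, f (a + ((k:ℝ)+1) * L) * L ≤ ∫ x in (g k)..(g (k+1)), f x := by
    intro k
    rw [intervalIntegral.integral_of_le (hmn k), ← hgs k]
    have hdiff : g (k+1) - g k = L := by simp only [hg]; push_cast; ring
    have hconst : ∫ x in Set.Ioc (g k) (g (k+1)), (fun _ => f (g (k+1))) x = f (g (k+1)) * L := by
      rw [setIntegral_const, Real.volume_real_Ioc, smul_eq_mul, hdiff, max_eq_left hL.le, mul_comm]
    rw [← hconst]
    exact setIntegral_mono_on (integrableOn_const (s := Set.Ioc (g k) (g (k+1))) (μ := volume) (C := f (g (k+1))) measure_Ioc_lt_top.ne)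
      ((hint (g k)).mono_set Set.Ioc_subset_Ioi_self) measurableSet_Ioc (fun u hu => hanti hu.2)
  calc (∑ k ∈ Finset.range N, f (a + ((k:ℝ)+1) * L)) * L
      = ∑ k ∈ Finset.range N, f (a + ((k:ℝ)+1) * L) * L := by rw [Finset.sum_mul]
    _ ≤ ∑ k ∈ Finset.range N, ∫ x in (g k)..(g (k+1)), f x := Finset.sum_le_sum (fun k _ => hterm k)
    _ = ∫ x in (g 0)..(g N), f x := hsum
    _ ≤ ∫ u in Set.Ioi a, f u := by
        have hg0 : g 0 = a := by simp [hg]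
        have h0N : g 0 ≤ g N := by
          simp only [hg]; push_cast; nlinarith [Nat.cast_nonneg (α := ℝ) N]
        rw [intervalIntegral.integral_of_le h0N, hg0]
        exact setIntegral_mono_set (hint a) (Eventually.of_forall hnn)
          (HasSubset.Subset.eventuallyLE Set.Ioc_subset_Ioi_self)

lemma half_I (hanti : Antitone f) (hnn : ∀ x, 0 ≤ f x) (hint : ∀ a, IntegrableOn f (Set.Ioi a))
    (c : ℝ) (hc : 0 < c) (hd : ∀ v ≥ 0, c * f v ≤ f (2*v)) :
    ∀ x ≥ 0, ∫ u in Set.Ioi (x/2), f u ≤ (1/(2*c)) * ∫ u in Set.Ioi x, f u := by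
  intro x hx
  have hmeas2 : AEStronglyMeasurable (fun v => f ((1/2 : ℝ) * v)) (volume.restrict (Set.Ioi x)) :=
    ((hanti.measurable).comp (measurable_const_mul _)).aestronglyMeasurable.restrict
  have hptw : ∀ v ∈ Set.Ioi x, f ((1/2:ℝ)*v) ≤ (1/c) * f v := by
    intro v hv
    have hv0 : 0 ≤ (1/2:ℝ)*v := by
      have := Set.mem_Ioi.mp hv; linarith
    have h1 := hd ((1/2)*v) hv0
    have h2 : 2*((1/2:ℝ)*v) = v := by ring
    rw [h2] at h1
    calc f ((1/2:ℝ)*v) = (1/c)*(c*f ((1/2:ℝ)*v)) := by field_simp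
      _ ≤ (1/c)*f v := mul_le_mul_of_nonneg_left h1 (by positivity)
  have hintg2 : IntegrableOn (fun v => f ((1/2:ℝ)*v)) (Set.Ioi x) := by
    refine Integrable.mono' ((hint x).const_mul (1/c)) hmeas2 ?_
    refine (ae_restrict_iff' measurableSet_Ioi).mpr (Eventually.of_forall (fun v hv => ?_))
    rw [Real.norm_of_nonneg (hnn _)]
    exact hptw v hv
  have hmono : ∫ v in Set.Ioi x, f ((1/2:ℝ)*v) ≤ ∫ v in Set.Ioi x, (1/c) * f v :=
    setIntegral_mono_on hintg2 ((hint x).const_mul _) measurableSet_Ioi hptw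
  have hsub := integral_comp_mul_left_Ioi f x (show (0:ℝ) < 1/2 by norm_num)
  rw [smul_eq_mul] at hsub
  have h12 : (1/2:ℝ)*x = x/2 := by ring
  rw [h12] at hsub
  have hcm : ∫ v in Set.Ioi x, (1/c) * f v = (1/c) * ∫ v in Set.Ioi x, f v :=
    integral_const_mul _ _
  rw [hsub, hcm] at hmono
  have hr : (1/(2*c)) * ∫ u in Set.Ioi x, f u = (1/2) * ((1/c) * ∫ u in Set.Ioi x, f u) := by
    ring
  rw [hr]
  norm_num at hmono ⊢
  linarith

lemma iter_I (hanti : Antitone f) (hnn : ∀ x, 0 ≤ f x) (hint : ∀ a, IntegrableOn f (Set.Ioi a))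
    (c : ℝ) (hc : 0 < c) (hd : ∀ v ≥ 0, c * f v ≤ f (2*v)) (k : ℕ) :
    ∀ x ≥ 0, ∫ u in Set.Ioi (x/2^k), f u ≤ (1/(2*c))^k * ∫ u in Set.Ioi x, f u := by
  induction k with
  | zero => intro x hx; simp
  | succ k ih =>
    intro x hx
    have h1 : x/2^(k+1) = (x/2^k)/2 := by ring
    rw [h1, pow_succ]
    have h2 := half_I f hanti hnn hint c hc hd (x/2^k) (div_nonneg hx (by positivity))
    have h3 := ih x hx
    have hk : (0:ℝ) ≤ 1/(2*c) := by positivity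
    nlinarith [mul_le_mul_of_nonneg_left h3 hk]

end Helpers2

theorem stmt_19 {Ω : Type*} [MeasurableSpace Ω] (μ : Measure Ω) [IsProbabilityMeasure μ]
    (B : Ω → ℝ) (hBnn : ∀ ω, 0 ≤ B ω) (hBint : Integrable B μ)
    (β : ℝ) (hβ : β = ∫ ω, B ω ∂μ) (hβpos : 0 < β)
    (tail : ℝ → ℝ) (htail : ∀ x, tail x = (μ {ω | B ω > x}).toReal)
    (hpos : ∀ x, 0 < tail x)
    (hlong : ∀ y > 0, Tendsto (fun x => tail (x + y) / tail x) atTop (nhds 1))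
    (hD : ∃ c > 0, ∀ x ≥ 0, c ≤ tail (2 * x) / tail x)
    (α ρ : ℝ) (hα : 0 < α) (hρ0 : 0 < ρ) (hρ1 : ρ < 1)
    (tailfw : ℝ → ℝ)
    (htailfw : ∀ x, tailfw x = (1 / β) * ∫ u in Set.Ioi x, tail u) :
    Tendsto (fun x =>
        (∑' m₁ : ℕ, ∑' m₂ : ℕ,
            tail ((x + ((m₁ : ℝ) + 1) * α) * (1 - ρ)) *
              tail ((x + ((m₂ : ℝ) + 1) * α) * (1 - ρ))) / tailfw x)
      atTop (nhds 0) := by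
  obtain ⟨c, hc, hDc⟩ := hD
  have htail_anti : Antitone tail := by
    intro s t hst
    rw [htail, htail]
    exact ENNReal.toReal_mono (measure_ne_top μ _)
      (measure_mono (fun ω h => lt_of_le_of_lt hst h))
  have htail_nn : ∀ x, 0 ≤ tail x := fun x => (hpos x).le
  have hint : ∀ a, IntegrableOn tail (Set.Ioi a) := by
    intro a
    have heq : tail = fun t => (μ {ω | B ω > t}).toReal := funext htail
    rw [heq]
    exact tail_io μ B hBnn hBint a
  have hd : ∀ v ≥ 0, c * tail v ≤ tail (2*v) := by
    intro v hv
    have h1 := hDc v hv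
    rw [le_div_iff₀ (hpos v)] at h1
    linarith [h1]
  set I : ℝ → ℝ := fun x => ∫ u in Set.Ioi x, tail u with hIdef
  obtain ⟨k, hk⟩ := exists_pow_lt_of_lt_one (show (0:ℝ) < 1 - ρ by linarith)
    (show (1:ℝ)/2 < 1 by norm_num)
  set L : ℝ := α * (1 - ρ) with hLdef
  have hL : 0 < L := mul_pos hα (by linarith)
  set K : ℝ := (1/(2*c))^k with hKdef
  have hKnn : 0 ≤ K := by positivity
  set S : ℝ → ℝ := fun x => ∑' m : ℕ, tail ((x + ((m:ℝ)+1)*α)*(1-ρ)) with hSdef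
  have hS : ∀ x, S x ≤ I (x*(1-ρ)) / L := by
    intro x
    have h1 := sum_le_int tail htail_anti htail_nn hint L hL (x*(1-ρ))
    have h2 : ∀ m : ℕ, (x + ((m:ℝ)+1)*α)*(1-ρ) = x*(1-ρ) + ((m:ℝ)+1)*L := by
      intro m; rw [hLdef]; ring
    calc S x = ∑' m : ℕ, tail (x*(1-ρ) + ((m:ℝ)+1)*L) := tsum_congr (fun m => by rw [h2 m])
      _ ≤ I (x*(1-ρ)) / L := h1
  have hSnn : ∀ x, 0 ≤ S x := fun x => tsum_nonneg (fun m => htail_nn _)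
  have hdouble : ∀ x, (∑' m₁ : ℕ, ∑' m₂ : ℕ,
      tail ((x + ((m₁ : ℝ) + 1) * α) * (1 - ρ)) * tail ((x + ((m₂ : ℝ) + 1) * α) * (1 - ρ)))
      = S x * S x := by
    intro x
    have h1 : ∀ m₁ : ℕ, (∑' m₂ : ℕ,
        tail ((x + ((m₁ : ℝ) + 1) * α) * (1 - ρ)) * tail ((x + ((m₂ : ℝ) + 1) * α) * (1 - ρ)))
        = tail ((x + ((m₁ : ℝ) + 1) * α) * (1 - ρ)) * S x := fun m₁ => tsum_mul_left
    rw [tsum_congr h1, tsum_mul_right]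
  have hIpos := I_pos tail htail_anti hpos hint
  have hIanti := I_anti tail htail_nn hint
  have hiter := iter_I tail htail_anti htail_nn hint c hc hd k
  have hbound : ∀ x ≥ 0, I (x*(1-ρ)) ≤ K * I x := by
    intro x hx
    have hhalf : (1/2:ℝ)^k = ((2:ℝ)^k)⁻¹ := by rw [one_div, inv_pow]
    have h2 : x * (1/2:ℝ)^k ≤ x * (1-ρ) := mul_le_mul_of_nonneg_left hk.le hx
    have h3 : x / 2^k = x * (1/2:ℝ)^k := by rw [hhalf, div_eq_mul_inv]
    calc I (x*(1-ρ)) ≤ I (x/2^k) := hIanti (by rw [h3]; linarith)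
      _ ≤ K * I x := hiter x hx
  have htfwpos : ∀ x, 0 < tailfw x := by
    intro x
    rw [htailfw]
    exact mul_pos (by positivity) (hIpos x)
  set C : ℝ := β * K / (L*L) with hCdef
  have hratio : ∀ x ≥ 0, S x * S x / tailfw x ≤ C * I (x*(1-ρ)) := by
    intro x hx
    rw [div_le_iff₀ (htfwpos x), htailfw]
    have h1 : S x * S x ≤ (I (x*(1-ρ)) / L) * (I (x*(1-ρ)) / L) :=
      mul_le_mul (hS x) (hS x) (hSnn x) (le_trans (hSnn x) (hS x))
    have h2 := hbound x hx
    have h3 : 0 ≤ I (x*(1-ρ)) := le_of_lt (hIpos _)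
    have h4 : C * I (x*(1-ρ)) * ((1/β) * I x) = (K / (L*L)) * (I (x*(1-ρ)) * I x) := by
      rw [hCdef]; field_simp
    rw [h4]
    have h5 : I (x*(1-ρ)) * I (x*(1-ρ)) ≤ K * (I (x*(1-ρ)) * I x) := by
      calc I (x*(1-ρ)) * I (x*(1-ρ)) ≤ I (x*(1-ρ)) * (K * I x) :=
            mul_le_mul_of_nonneg_left h2 h3
        _ = K * (I (x*(1-ρ)) * I x) := by ring
    calc S x * S x ≤ (I (x*(1-ρ)) / L) * (I (x*(1-ρ)) / L) := h1
      _ = (I (x*(1-ρ)) * I (x*(1-ρ))) / (L*L) := div_mul_div_comm _ _ _ _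
      _ ≤ (K * (I (x*(1-ρ)) * I x)) / (L*L) := by gcongr
      _ = (K / (L*L)) * (I (x*(1-ρ)) * I x) := mul_div_right_comm _ _ _
  have hg0 : Tendsto (fun x : ℝ => C * I (x*(1-ρ))) atTop (nhds 0) := by
    have h1 : Tendsto (fun x : ℝ => x*(1-ρ)) atTop atTop :=
      Tendsto.atTop_mul_const (by linarith) tendsto_id
    have h2 := (I_zero tail htail_nn hint).comp h1
    have h3 := h2.const_mul C
    simpa using h3
  refine squeeze_zero' ?_ ?_ hg0
  · filter_upwards [eventually_ge_atTop (0:ℝ)] with x hx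
    rw [hdouble x]
    exact div_nonneg (mul_nonneg (hSnn x) (hSnn x)) (htfwpos x).le
  · filter_upwards [eventually_ge_atTop (0:ℝ)] with x hx
    rw [hdouble x]
    exact hratio x hx
end
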